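/- Let (f_n)_n be a sequence of convex functions f_n : ℝ^q → ℝ converging locally uniformly (i.e. uniformly on every compact subset of ℝ^q) to a strictly convex continuous function f : ℝ^q → ℝ that admits a global minimizer θ* ∈ ℝ^q. For each n, let θ_n ∈ ℝ^q be a global minimizer of f_n. Then θ_n → θ* as n → ∞. Moreover, f_n(θ_n) → f(θ*). -/

import Mathlib

open Filter

/-- Convergence of minimizers: if convex functions `f_n` converge locally
uniformly (uniformly on every compact set) to a strictly convex continuous
function `f` with global minimizer `θ*`, and `θ_n` is a global minimizer of
`f_n`, then `θ_n → θ*` and `f_n(θ_n) → f(θ*)`. -/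
theorem stmt_10 {q : ℕ} (f : ℕ → EuclideanSpace ℝ (Fin q) → ℝ)
    (hconv : ∀ n, ConvexOn ℝ Set.univ (f n))
    (flim : EuclideanSpace ℝ (Fin q) → ℝ)
    (hstrict : StrictConvexOn ℝ Set.univ flim)
    (hcont : Continuous flim)
    (hunif : ∀ K : Set (EuclideanSpace ℝ (Fin q)), IsCompact K →
      TendstoUniformlyOn f flim atTop K)
    (θs : EuclideanSpace ℝ (Fin q)) (hθs : ∀ θ, flim θs ≤ flim θ)
    (θ : ℕ → EuclideanSpace ℝ (Fin q)) (hθ : ∀ n θ', f n (θ n) ≤ f n θ') :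
    Tendsto θ atTop (nhds θs) ∧
      Tendsto (fun n => f n (θ n)) atTop (nhds (flim θs)) := by
  -- θs is the strict unique minimizer of flim
  have hmin : ∀ x : EuclideanSpace ℝ (Fin q), x ≠ θs → flim θs < flim x := by
    intro x hx
    by_contra h
    push_neg at h
    have h2 := hstrict.2 (Set.mem_univ x) (Set.mem_univ θs) hx
      (by norm_num : (0:ℝ) < 1/2) (by norm_num : (0:ℝ) < 1/2) (by norm_num)
    have h3 := hθs ((1/2 : ℝ) • x + (1/2 : ℝ) • θs)
    simp only [smul_eq_mul] at h2
    nlinarith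
  have hA : Tendsto θ atTop (nhds θs) := by
    rw [Metric.tendsto_nhds]
    intro ε hε
    by_cases htriv : ∀ v : EuclideanSpace ℝ (Fin q), v = θs
    · filter_upwards with n
      rw [htriv (θ n)]
      simpa using hε
    · push_neg at htriv
      obtain ⟨v, hv⟩ := htriv
      set r := ε/2 with hr
      have hrpos : 0 < r := by positivity
      have hvne : v - θs ≠ 0 := sub_ne_zero.mpr hv
      have hvnorm : ‖v - θs‖ ≠ 0 := norm_ne_zero_iff.mpr hvne
      set x0 : EuclideanSpace ℝ (Fin q) := θs + (r / ‖v - θs‖) • (v - θs) with hx0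
      have hx0S : dist x0 θs = r := by
        rw [dist_eq_norm]
        have : x0 - θs = (r / ‖v - θs‖) • (v - θs) := by
          simp [hx0]
        rw [this, norm_smul, Real.norm_eq_abs, abs_of_pos (by positivity)]
        field_simp
      have hScomp : IsCompact (Metric.sphere θs r) := isCompact_sphere _ _
      have hSne : (Metric.sphere θs r).Nonempty := ⟨x0, Metric.mem_sphere.mpr hx0S⟩
      obtain ⟨z, hzS, hzmin⟩ := hScomp.exists_isMinOn hSne hcont.continuousOn
      have hzd : dist z θs = r := Metric.mem_sphere.mp hzS
      have hzne : z ≠ θs := by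
        intro h
        rw [h] at hzd
        simp at hzd
        linarith
      have hm : flim θs < flim z := hmin z hzne
      set δ := (flim z - flim θs)/2 with hδ
      have hδpos : 0 < δ := by rw [hδ]; linarith
      have hK : IsCompact (Metric.closedBall θs r) := isCompact_closedBall _ _
      have hev := (Metric.tendstoUniformlyOn_iff.mp (hunif _ hK)) δ hδpos
      filter_upwards [hev] with n hn
      by_contra hfar
      push_neg at hfar
      have hd : r < dist (θ n) θs := by
        calc r < ε := by rw [hr]; linarith
        _ ≤ dist (θ n) θs := hfar
      have hdpos : 0 < dist (θ n) θs := lt_trans hrpos hd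
      set t := r / dist (θ n) θs with ht
      have ht0 : 0 < t := div_pos hrpos hdpos
      have ht1 : t < 1 := (div_lt_one hdpos).mpr hd
      set p := t • (θ n) + (1 - t) • θs with hp
      have hpS : dist p θs = r := by
        rw [dist_eq_norm]
        have hps : p - θs = t • (θ n - θs) := by
          rw [hp]
          rw [smul_sub, sub_smul, one_smul]
          abel
        rw [hps, norm_smul, Real.norm_eq_abs, abs_of_pos ht0, ← dist_eq_norm]
        rw [ht]
        field_simp
      have hpK : p ∈ Metric.closedBall θs r := by simp [hpS]
      have hsK : θs ∈ Metric.closedBall θs r := Metric.mem_closedBall_self hrpos.le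
      have h1 := hn p hpK
      have h2 := hn θs hsK
      have hc := (hconv n).2 (Set.mem_univ (θ n)) (Set.mem_univ θs) ht0.le
        (by linarith : (0:ℝ) ≤ 1 - t) (by ring)
      have h3 := hθ n θs
      have h4 : flim z ≤ flim p := hzmin (Metric.mem_sphere.mpr hpS)
      rw [Real.dist_eq] at h1 h2
      have hfp : f n p ≤ f n θs := by
        have : f n p ≤ t * f n (θ n) + (1 - t) * f n θs := hc
        nlinarith
      have e1 := abs_lt.mp h1
      have e2 := abs_lt.mp h2
      rw [hδ] at e1 e2
      linarith [e1.1, e1.2, e2.1, e2.2]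
  refine ⟨hA, ?_⟩
  rw [Metric.tendsto_nhds]
  intro ε hε
  have hK : IsCompact (Metric.closedBall θs 1) := isCompact_closedBall _ _
  have hev := (Metric.tendstoUniformlyOn_iff.mp (hunif _ hK)) (ε/2) (by linarith)
  have hnear : ∀ᶠ n in atTop, dist (θ n) θs < 1 := (Metric.tendsto_nhds.mp hA) 1 one_pos
  have hcontcomp : Tendsto (fun n => flim (θ n)) atTop (nhds (flim θs)) :=
    (hcont.continuousAt.tendsto).comp hA
  have hev2 := (Metric.tendsto_nhds.mp hcontcomp) (ε/2) (by linarith)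
  filter_upwards [hev, hnear, hev2] with n h1 h2 h3
  have h4 := h1 (θ n) (by simp [Metric.mem_closedBall]; linarith)
  calc dist (f n (θ n)) (flim θs)
      ≤ dist (f n (θ n)) (flim (θ n)) + dist (flim (θ n)) (flim θs) := dist_triangle _ _ _
    _ < ε := by rw [dist_comm] at h4; linarith
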